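/- Let 𝒢 ≤ S_n be a transitive subgroup, let p ∈ [1,∞), let F ∈ C(ℝ^n; ℝ) be 𝒢 invariant, and let g : ℝ^n → ℝ be Lipschitz continuous, 𝒢 invariant, and satisfy F(ℝ^n) ⊂ g(ℝ^n). Then for every compact K ⊂ ℝ^n and every ε > 0 there exists a continuous 𝒢 equivariant mapping φ ∈ C(ℝ^n; ℝ^n) such that ‖F − g ∘ φ‖_{L^p(K)} ≤ ε. -/

import Mathlib

open MeasureTheory

namespace SymDyn

/-- Action of a permutation on ℝⁿ by permuting coordinates: `(𝔤(x))_i = x_{𝔤(i)}`. -/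
def permAct {n : ℕ} (g : Equiv.Perm (Fin n)) (x : Fin n → ℝ) : Fin n → ℝ :=
  fun i => x (g i)

/-- `F` is 𝒢 invariant. -/
def IsInvariant {n : ℕ} {α : Type*} (G : Subgroup (Equiv.Perm (Fin n)))
    (F : (Fin n → ℝ) → α) : Prop :=
  ∀ g ∈ G, ∀ x, F (permAct g x) = F x

/-- `f` is 𝒢 equivariant. -/
def IsEquivariant {n : ℕ} (G : Subgroup (Equiv.Perm (Fin n)))
    (f : (Fin n → ℝ) → (Fin n → ℝ)) : Prop :=
  ∀ g ∈ G, ∀ x, f (permAct g x) = permAct g (f x)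

/-- `G` is a transitive permutation group on indices. -/
def IsTransitive {n : ℕ} (G : Subgroup (Equiv.Perm (Fin n))) : Prop :=
  ∀ i j : Fin n, ∃ g ∈ G, g i = j

/-- Lipschitz with some (finite) constant. -/
def IsLip {E F : Type*} [PseudoEMetricSpace E] [PseudoEMetricSpace F] (f : E → F) : Prop :=
  ∃ K : NNReal, LipschitzWith K f

/-- `φ` is the time-`T` flow map of the ODE `ż = f(z)`. -/
def IsFlowMap {n : ℕ} (f : (Fin n → ℝ) → (Fin n → ℝ)) (T : ℝ)
    (φ : (Fin n → ℝ) → (Fin n → ℝ)) : Prop :=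
  ∀ x : Fin n → ℝ, ∃ z : ℝ → (Fin n → ℝ),
    z 0 = x ∧ (∀ t : ℝ, HasDerivAt z (f (z t)) t) ∧ φ x = z T

/-- Attainable set of a control family: all finite compositions
`φ(f₁,τ₁) ∘ ⋯ ∘ φ(f_k,τ_k)` of flow maps of members of `𝓕`. -/
def AttainSet {n : ℕ} (𝓕 : Set ((Fin n → ℝ) → (Fin n → ℝ))) :
    Set ((Fin n → ℝ) → (Fin n → ℝ)) :=
  { φ | ∃ k : ℕ, 1 ≤ k ∧
      ∃ (fs : Fin k → (Fin n → ℝ) → (Fin n → ℝ)) (τ : Fin k → ℝ)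
        (ψ : Fin k → (Fin n → ℝ) → (Fin n → ℝ)),
        (∀ i, fs i ∈ 𝓕 ∧ 0 ≤ τ i ∧ IsFlowMap (fs i) (τ i) (ψ i)) ∧
        φ = (List.ofFn ψ).foldr (· ∘ ·) id }

/-- Dynamical hypothesis space `H_ode(𝓕,𝓖) = {g ∘ φ : g ∈ 𝓖, φ ∈ A_𝓕}`. -/
def Hode {n : ℕ} {β : Type*} (𝓕 : Set ((Fin n → ℝ) → (Fin n → ℝ)))
    (𝓖 : Set ((Fin n → ℝ) → β)) : Set ((Fin n → ℝ) → β) :=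
  { F | ∃ g ∈ 𝓖, ∃ φ ∈ AttainSet 𝓕, F = g ∘ φ }

/-- Closure of a family of functions in the topology of compact convergence. -/
def ccClosure {α F : Type*} [TopologicalSpace α] [NormedAddCommGroup F]
    (S : Set (α → F)) : Set (α → F) :=
  { h | ∀ K : Set α, IsCompact K → ∀ ε : ℝ, 0 < ε → ∃ f ∈ S, ∀ x ∈ K, ‖f x - h x‖ ≤ ε }

/-- `CH̄(S)`: closure of the convex hull in the topology of compact convergence. -/
def CHbar {α F : Type*} [TopologicalSpace α] [NormedAddCommGroup F] [NormedSpace ℝ F]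
    (S : Set (α → F)) : Set (α → F) :=
  ccClosure (convexHull ℝ S)

/-- The `coor` operator: scalar functions `f₁` such that for some `𝔱_i ∈ G` with
`𝔱_i(1) = i`, the assembled mapping `[f₁∘𝔱_1, …, f₁∘𝔱_n]` belongs to `𝓕`. -/
def coorFam {n : ℕ} [NeZero n] (G : Subgroup (Equiv.Perm (Fin n)))
    (𝓕 : Set ((Fin n → ℝ) → (Fin n → ℝ))) : Set ((Fin n → ℝ) → ℝ) :=
  { f1 | ∃ t : Fin n → Equiv.Perm (Fin n),
      (∀ i, t i ∈ G ∧ t i 0 = i) ∧ (fun x i => f1 (permAct (t i) x)) ∈ 𝓕 }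

/-- One-dimensional well function: Lipschitz with zero set a nondegenerate
closed bounded interval. -/
def IsWell1D (h : ℝ → ℝ) : Prop :=
  IsLip h ∧ ∃ a b : ℝ, a < b ∧ {x : ℝ | h x = 0} = Set.Icc a b

/-- Symmetric invariant well function. -/
def IsSymWell {n : ℕ} (τ : (Fin n → ℝ) → ℝ) : Prop :=
  IsLip τ ∧
  (∀ g : Equiv.Perm (Fin n), ∀ x, τ (permAct g x) = τ x) ∧
  (∃ I : Set ℝ, I.Nonempty ∧ I.OrdConnected ∧ Bornology.IsBounded I ∧
      ∀ x : Fin n → ℝ, (∀ i, x i ∈ I) → τ x = 0) ∧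
  (∀ i : Fin n, ∀ b : ℝ, 0 < b → ∃ a : ℝ, 0 < a ∧
      ∀ x : Fin n → ℝ, a < |x i| → (∀ j, j ≠ i → |x j| < b) → τ x ≠ 0)

/-- A point is in general position iff its coordinates are pairwise distinct. -/
def GeneralPos {n : ℕ} (x : Fin n → ℝ) : Prop := Function.Injective x

/-- The similarity `s̄(x,y)` is nonzero: at least one of the two points is in
general position, and some coordinate value is shared. -/
def SimilarPos {n : ℕ} (x y : Fin n → ℝ) : Prop :=
  (GeneralPos x ∨ GeneralPos y) ∧ ∃ i j : Fin n, x i = y j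

/-- The perturbation property of a control family. -/
def PerturbProp {n : ℕ} (𝓕 : Set ((Fin n → ℝ) → (Fin n → ℝ))) : Prop :=
  ∀ x y : Fin n → ℝ, SimilarPos x y →
    ∃ f ∈ 𝓕, ∃ u : ℝ → ℝ, Continuous u ∧ StrictMono u ∧
      ∃ i : Fin n, x i = y i ∧ f (fun j => u (x j)) i ≠ f (fun j => u (y j)) i

/-- Cross section `Q_𝔤 = {x : x_{𝔤⁻¹(1)} > x_{𝔤⁻¹(2)} > ⋯ > x_{𝔤⁻¹(n)}}`. -/
def crossSec {n : ℕ} (g : Equiv.Perm (Fin n)) : Set (Fin n → ℝ) :=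
  { x | ∀ i j : Fin n, i < j → x (g⁻¹ j) < x (g⁻¹ i) }

/-- `A` is a (right) transversal of the subgroup `G`. -/
def IsTransversal {n : ℕ} (G : Subgroup (Equiv.Perm (Fin n)))
    (A : Set (Equiv.Perm (Fin n))) : Prop :=
  (∀ a ∈ A, ∀ b ∈ A, a ≠ b → a * b⁻¹ ∉ G) ∧
  (∀ b : Equiv.Perm (Fin n), ∃ a ∈ A, a * b⁻¹ ∈ G)

/-- Cross section of a transversal: `Q_A = ⋃_{𝔞 ∈ A} Q_𝔞`. -/
def crossSecA {n : ℕ} (A : Set (Equiv.Perm (Fin n))) : Set (Fin n → ℝ) :=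
  ⋃ a ∈ A, crossSec a

/-- `𝔞` and `𝔟` are directly `𝓕` connected. -/
def DirectlyConn {n : ℕ} (𝓕 : Set ((Fin n → ℝ) → (Fin n → ℝ)))
    (a b : Equiv.Perm (Fin n)) : Prop :=
  ∃ i j : Fin n, i ≠ j ∧ a = Equiv.swap i j * b ∧
    ∃ z ∈ frontier (crossSec a) ∩ frontier (crossSec b), ∃ f ∈ 𝓕, f z i ≠ f z j

/-- `𝔞` and `𝔟` are `𝓕` connected (joined by a chain of directly connected elements). -/
def ConnIn {n : ℕ} (𝓕 : Set ((Fin n → ℝ) → (Fin n → ℝ)))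
    (a b : Equiv.Perm (Fin n)) : Prop :=
  ∃ (s : ℕ) (g : Fin (s + 1) → Equiv.Perm (Fin n)), g 0 = a ∧ g (Fin.last s) = b ∧
    ∀ i : Fin s, DirectlyConn 𝓕 (g i.castSucc) (g i.succ)

/-- `𝓕` resolves `G`: it has the perturbation property and is `G` transversally
transitive. -/
def Resolves {n : ℕ} (G : Subgroup (Equiv.Perm (Fin n)))
    (𝓕 : Set ((Fin n → ℝ) → (Fin n → ℝ))) : Prop :=
  PerturbProp 𝓕 ∧ ∃ A : Set (Equiv.Perm (Fin n)), IsTransversal G A ∧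
    ∀ a ∈ A, ∀ b ∈ A, a ≠ b → ConnIn 𝓕 a b

/-- A finite point set is `G` distinct: the `G` orbits of its points are distinct. -/
def GDistinct {n M : ℕ} (G : Subgroup (Equiv.Perm (Fin n)))
    (x : Fin M → Fin n → ℝ) : Prop :=
  ∀ g ∈ G, ∀ i j : Fin M, permAct g (x i) = x j → g = 1 ∧ i = j

/-- `x ≺ y`: every coordinate of `x` is below every coordinate of `y`. -/
def precLT {n : ℕ} (x y : Fin n → ℝ) : Prop := ∀ i j : Fin n, x i < y j

/-- A finite point set is partially ordered. -/
def PartiallyOrderedPts {n m : ℕ} (x : Fin m → Fin n → ℝ) : Prop :=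
  ∀ i j : Fin m,
    ((j < i ∧ GeneralPos (x i) ∧ GeneralPos (x j)) ∨
      (¬ GeneralPos (x i) ∧ GeneralPos (x j))) → precLT (x i) (x j)

/-- A finite point set is well perturbed: whenever two (indexed) coordinate values
coincide nontrivially, both points fail to be in general position. -/
def WellPerturbed {n m : ℕ} (y : Fin m → Fin n → ℝ) : Prop :=
  ∀ (j l : Fin m) (i k : Fin n), (i, j) ≠ (k, l) → y j i = y l k →
    ¬ GeneralPos (y j) ∧ ¬ GeneralPos (y l)

/-- Composition of a finite family of maps, applying the index-`0` map first. -/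
def foldComp {E : Type*} {s : ℕ} (Φ : Fin s → E → E) : E → E :=
  (List.ofFn Φ).foldl (fun acc f => f ∘ acc) id

/-- `t` is a partition `0 = t₀ < t₁ < ⋯ < t_s = T` of `[0,T]`. -/
def IsPartition {s : ℕ} (T : ℝ) (t : Fin (s + 1) → ℝ) : Prop :=
  StrictMono t ∧ t 0 = 0 ∧ t (Fin.last s) = T

/-- Discrete flow of a one-step numerical integrator `Φ` over a partition. -/
def discFlow {n : ℕ} (Φ : ℝ → (Fin n → ℝ) → (Fin n → ℝ)) {s : ℕ}
    (t : Fin (s + 1) → ℝ) : (Fin n → ℝ) → (Fin n → ℝ) :=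
  foldComp (fun i : Fin s => Φ (t i.succ - t i.castSucc))

/-- Convergence of a numerical scheme `Φ` for the vector field `f`. -/
def ConvergentScheme {n : ℕ} (f : (Fin n → ℝ) → (Fin n → ℝ))
    (Φ : ℝ → (Fin n → ℝ) → (Fin n → ℝ)) : Prop :=
  (∀ K : Set (Fin n → ℝ), IsCompact K → ∀ ε : ℝ, 0 < ε → ∃ δ > (0 : ℝ),
      ∀ τ : ℝ, 0 < τ → τ < δ → ∀ x ∈ K, ‖Φ τ x - x‖ ≤ ε) ∧
  (∀ T : ℝ, ∀ φT : (Fin n → ℝ) → (Fin n → ℝ), IsFlowMap f T φT →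
      ∀ K : Set (Fin n → ℝ), IsCompact K → ∀ ε : ℝ, 0 < ε → ∃ δ > (0 : ℝ),
      ∀ (s : ℕ) (t : Fin (s + 1) → ℝ), IsPartition T t →
        (∀ i : Fin s, t i.succ - t i.castSucc < δ) →
        ∀ x ∈ K, ‖discFlow Φ t x - φT x‖ ≤ ε) ∧
  (∃ g : (Fin n → ℝ) → ℝ → ℝ, Continuous (fun q : (Fin n → ℝ) × ℝ => g q.1 q.2) ∧
      ∀ T : ℝ, 0 ≤ T → ∀ (s : ℕ) (t : Fin (s + 1) → ℝ), IsPartition T t →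
        ∀ x, ‖discFlow Φ t x‖ ≤ g x T)

/-- `L^p` error of `f` on the region `K` (with respect to Lebesgue measure). -/
noncomputable def lpErr {n : ℕ} {β : Type*} [NormedAddCommGroup β]
    (p : ℝ) (K : Set (Fin n → ℝ)) (f : (Fin n → ℝ) → β) : ENNReal :=
  eLpNorm f (ENNReal.ofReal p) (volume.restrict K)

/-- Universal approximation property in `L^p` on compact sets. -/
def HasUAP {n : ℕ} {β : Type*} [NormedAddCommGroup β]
    (p : ℝ) (H : Set ((Fin n → ℝ) → β)) : Prop :=
  ∀ F : (Fin n → ℝ) → β, Continuous F → ∀ K : Set (Fin n → ℝ), IsCompact K →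
    ∀ ε : ℝ, 0 < ε → ∃ Fh ∈ H, lpErr p K (fun x => F x - Fh x) ≤ ENNReal.ofReal ε

/-- `G` universal approximation property in `L^p` on compact sets. -/
def HasGUAP {n : ℕ} {β : Type*} [NormedAddCommGroup β]
    (G : Subgroup (Equiv.Perm (Fin n))) (p : ℝ) (H : Set ((Fin n → ℝ) → β)) : Prop :=
  ∀ F : (Fin n → ℝ) → β, Continuous F → IsInvariant G F →
    ∀ K : Set (Fin n → ℝ), IsCompact K →
    ∀ ε : ℝ, 0 < ε → ∃ Fh ∈ H, lpErr p K (fun x => F x - Fh x) ≤ ENNReal.ofReal ε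

/-- Discretized attainable set obtained from a numerical scheme `sch`. -/
def discAttain {n : ℕ} (𝓕 : Set ((Fin n → ℝ) → (Fin n → ℝ)))
    (sch : ((Fin n → ℝ) → (Fin n → ℝ)) → ℝ → (Fin n → ℝ) → (Fin n → ℝ)) :
    Set ((Fin n → ℝ) → (Fin n → ℝ)) :=
  { φ | ∃ l : ℕ, 1 ≤ l ∧ ∃ (fs : Fin l → (Fin n → ℝ) → (Fin n → ℝ)) (t : Fin (l + 1) → ℝ),
      t 0 = 0 ∧ StrictMono t ∧ (∀ i, fs i ∈ 𝓕) ∧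
      φ = foldComp (fun i : Fin l => sch (fs i) (t i.succ - t i.castSucc)) }


section Aux

variable {n : ℕ}

lemma permAct_permAct (g h : Equiv.Perm (Fin n)) (x : Fin n → ℝ) :
    permAct g (permAct h x) = permAct (h * g) x := rfl

lemma permAct_one (x : Fin n → ℝ) : permAct 1 x = x := rfl

lemma permAct_smul (g : Equiv.Perm (Fin n)) (c : ℝ) (y : Fin n → ℝ) :
    permAct g (c • y) = c • permAct g y := rfl

lemma permAct_sum {ι : Type*} (s : Finset ι) (g : Equiv.Perm (Fin n))
    (f : ι → Fin n → ℝ) : permAct g (∑ i ∈ s, f i) = ∑ i ∈ s, permAct g (f i) := by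
  funext j; simp [permAct, Finset.sum_apply]

lemma continuous_permAct (g : Equiv.Perm (Fin n)) : Continuous (permAct (n := n) g) :=
  continuous_pi fun i => continuous_apply (g i)

lemma norm_permAct_le (g : Equiv.Perm (Fin n)) (y : Fin n → ℝ) :
    ‖permAct g y‖ ≤ ‖y‖ := by
  rw [pi_norm_le_iff_of_nonneg (norm_nonneg y)]
  exact fun i => norm_le_pi_norm y (g i)

lemma norm_permAct (g : Equiv.Perm (Fin n)) (y : Fin n → ℝ) :
    ‖permAct g y‖ = ‖y‖ := by
  refine le_antisymm (norm_permAct_le g y) ?_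
  have := norm_permAct_le g⁻¹ (permAct g y)
  rwa [permAct_permAct, mul_inv_cancel, permAct_one] at this

/-- `x ∘ a` is strictly decreasing. -/
def Cham (a : Equiv.Perm (Fin n)) (x : Fin n → ℝ) : Prop :=
  ∀ i j : Fin n, i < j → x (a j) < x (a i)

lemma cham_exists {x : Fin n → ℝ} (hx : Function.Injective x) : ∃ a, Cham a x := by
  have hmono : Monotone (x ∘ Tuple.sort x) := Tuple.monotone_sort x
  have hsm : StrictMono (x ∘ Tuple.sort x) :=
    hmono.strictMono_of_injective (hx.comp (Equiv.injective _))
  refine ⟨Fin.revPerm.trans (Tuple.sort x), fun i j hij => ?_⟩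
  have h : Fin.rev j < Fin.rev i := Fin.rev_lt_rev.mpr hij
  simpa using hsm h

lemma cham_unique {x : Fin n → ℝ} (hx : Function.Injective x)
    {a b : Equiv.Perm (Fin n)} (ha : Cham a x) (hb : Cham b x) : a = b := by
  have hsa : StrictMono (x ∘ a ∘ Fin.rev) := fun i j hij =>
    ha (Fin.rev j) (Fin.rev i) (Fin.rev_lt_rev.mpr hij)
  have hsb : StrictMono (x ∘ b ∘ Fin.rev) := fun i j hij =>
    hb (Fin.rev j) (Fin.rev i) (Fin.rev_lt_rev.mpr hij)
  have hra : Set.range (x ∘ a ∘ Fin.rev) = Set.range x := by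
    have h1 : Function.Surjective (fun i : Fin n => a (Fin.rev i)) :=
      a.surjective.comp Fin.rev_surjective
    exact Function.Surjective.range_comp h1 x
  have hrb : Set.range (x ∘ b ∘ Fin.rev) = Set.range x := by
    have h1 : Function.Surjective (fun i : Fin n => b (Fin.rev i)) :=
      b.surjective.comp Fin.rev_surjective
    exact Function.Surjective.range_comp h1 x
  haveI : WellFoundedLT (Fin n) := inferInstance
  have heq : (x ∘ a ∘ Fin.rev) = (x ∘ b ∘ Fin.rev) :=
    (StrictMono.range_inj hsa hsb).mp (hra.trans hrb.symm)
  apply Equiv.ext; intro j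
  have := congrFun heq (Fin.rev j)
  simp only [Function.comp_apply, Fin.rev_rev] at this
  exact hx this

lemma cham_permAct {a g : Equiv.Perm (Fin n)} {x : Fin n → ℝ} :
    Cham a (permAct g x) ↔ Cham (g * a) x := by
  constructor <;> intro h i j hij <;> simpa [permAct, Equiv.Perm.mul_apply] using h i j hij

end Aux

section Bump

variable {n : ℕ}

def pairsF (n : ℕ) : Finset (Fin n × Fin n) := Finset.univ.filter fun p => p.1 < p.2

def bump (δ : ℝ) (a : Equiv.Perm (Fin n)) (y : Fin n → ℝ) : ℝ :=
  ∏ p ∈ pairsF n, max 0 (min δ (y (a p.1) - y (a p.2)))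

noncomputable instance quotFintype (G : Subgroup (Equiv.Perm (Fin n))) :
    Fintype (Quotient (QuotientGroup.rightRel G)) := Fintype.ofFinite _

noncomputable instance subFintype (G : Subgroup (Equiv.Perm (Fin n))) : Fintype G :=
  Fintype.ofFinite _

noncomputable def gam (G : Subgroup (Equiv.Perm (Fin n))) (δ : ℝ) (y : Fin n → ℝ) : ℝ :=
  ∑ q : Quotient (QuotientGroup.rightRel G), bump δ q.out y

def muw (δ : ℝ) (x : Fin n → ℝ) : ℝ :=
  ∑ p ∈ (Finset.univ : Finset (Fin n)).offDiag, max 0 (δ - |x p.1 - x p.2|)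

def Sep (δ : ℝ) (x : Fin n → ℝ) : Prop := ∀ i j, i ≠ j → δ ≤ |x i - x j|

noncomputable def den (G : Subgroup (Equiv.Perm (Fin n))) (δ : ℝ) (x : Fin n → ℝ) : ℝ :=
  (∑ g : G, gam G δ (permAct (g : Equiv.Perm (Fin n)) x)) + muw δ x

noncomputable def curveC (θ : ℝ) (N : ℕ) (d : ℕ → ℝ) (y : ℕ → Fin n → ℝ) (t : ℝ) :
    Fin n → ℝ :=
  y 0 + ∑ k ∈ Finset.Ico 1 N, (max 0 (min 1 ((t - (d k - θ)) / (2*θ)))) • (y k - y (k-1))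

noncomputable def phiC (G : Subgroup (Equiv.Perm (Fin n))) (δ θ : ℝ) (N : ℕ) (d : ℕ → ℝ)
    (y : ℕ → Fin n → ℝ) (F : (Fin n → ℝ) → ℝ) (x : Fin n → ℝ) : Fin n → ℝ :=
  (den G δ x)⁻¹ •
    ∑ g : G, gam G δ (permAct (g : Equiv.Perm (Fin n)) x) •
      permAct ((g : Equiv.Perm (Fin n))⁻¹) (curveC θ N d y (F x))

lemma bump_nonneg (δ : ℝ) (a : Equiv.Perm (Fin n)) (y : Fin n → ℝ) : 0 ≤ bump δ a y :=
  Finset.prod_nonneg fun _ _ => le_max_left _ _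

lemma cham_of_bump_ne {δ : ℝ} {a : Equiv.Perm (Fin n)} {y : Fin n → ℝ}
    (h : bump δ a y ≠ 0) : Cham a y := by
  intro i j hij
  by_contra hc
  push_neg at hc
  apply h
  apply Finset.prod_eq_zero (i := (i, j)) (by simp [pairsF, hij])
  have h1 : min δ (y (a i) - y (a j)) ≤ 0 := le_trans (min_le_right _ _) (by linarith)
  simpa [max_eq_left h1]

lemma bump_pos {δ : ℝ} {a : Equiv.Perm (Fin n)} {y : Fin n → ℝ}
    (hδ : 0 < δ) (h : Cham a y) : 0 < bump δ a y := by
  apply Finset.prod_pos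
  intro p hp
  have hp' : p.1 < p.2 := by simpa [pairsF] using hp
  have := h p.1 p.2 hp'
  have h1 : 0 < min δ (y (a p.1) - y (a p.2)) := lt_min hδ (by linarith)
  calc (0:ℝ) < min δ (y (a p.1) - y (a p.2)) := h1
    _ ≤ max 0 (min δ (y (a p.1) - y (a p.2))) := le_max_right _ _

lemma gam_nonneg (G : Subgroup (Equiv.Perm (Fin n))) (δ : ℝ) (y : Fin n → ℝ) :
    0 ≤ gam G δ y :=
  Finset.sum_nonneg fun _ _ => bump_nonneg _ _ _

lemma muw_nonneg (δ : ℝ) (x : Fin n → ℝ) : 0 ≤ muw δ x :=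
  Finset.sum_nonneg fun _ _ => le_max_left _ _

lemma muw_eq_zero_iff (δ : ℝ) (x : Fin n → ℝ) : muw δ x = 0 ↔ Sep δ x := by
  rw [muw, Finset.sum_eq_zero_iff_of_nonneg (fun _ _ => le_max_left _ _)]
  constructor
  · intro h i j hij
    have := h (i, j) (by simp [Finset.mem_offDiag, hij])
    have h2 : δ - |x i - x j| ≤ 0 := by
      by_contra hc
      push_neg at hc
      rw [max_eq_right (le_of_lt hc)] at this
      linarith
    linarith [h2]
  · intro h p hp
    have hne : p.1 ≠ p.2 := (Finset.mem_offDiag.mp hp).2.2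
    have := h p.1 p.2 hne
    exact max_eq_left (by linarith)

lemma sep_inj {δ : ℝ} {x : Fin n → ℝ} (hδ : 0 < δ) (h : Sep δ x) :
    Function.Injective x := by
  intro i j hij
  by_contra hc
  have := h i j hc
  rw [hij] at this
  simp at this
  linarith

lemma gam_structure (G : Subgroup (Equiv.Perm (Fin n))) {δ : ℝ} {x : Fin n → ℝ}
    (hδ : 0 < δ) (hx : Sep δ x) :
    ∃ g₀ : G, 0 < gam G δ (permAct (g₀ : Equiv.Perm (Fin n)) x) ∧
      ∀ g : G, g ≠ g₀ → gam G δ (permAct (g : Equiv.Perm (Fin n)) x) = 0 := by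
  classical
  have hinj := sep_inj hδ hx
  obtain ⟨σ, hσ⟩ := cham_exists hinj
  set S := QuotientGroup.rightRel G with hS
  set w : Equiv.Perm (Fin n) := (Quotient.mk S σ).out with hw
  have hww : Quotient.mk S w = Quotient.mk S σ := Quotient.out_eq _
  have hrel : σ * w⁻¹ ∈ G := by
    have h1 := Quotient.exact hww
    exact QuotientGroup.rightRel_apply.mp h1
  refine ⟨⟨σ * w⁻¹, hrel⟩, ?_, ?_⟩
  · apply Finset.sum_pos' (fun q _ => bump_nonneg _ _ _)
    refine ⟨Quotient.mk S σ, Finset.mem_univ _, ?_⟩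
    apply bump_pos hδ
    rw [cham_permAct]
    have : σ * w⁻¹ * (Quotient.mk S σ).out = σ := by
      rw [← hw]; group
    rw [this]
    exact hσ
  · intro g hg
    apply Finset.sum_eq_zero
    intro q _
    by_contra hne
    have hcham : Cham ((g : Equiv.Perm (Fin n)) * q.out) x := cham_permAct.mp (cham_of_bump_ne hne)
    have heq : (g : Equiv.Perm (Fin n)) * q.out = σ := cham_unique hinj hcham hσ
    have hqout : q.out = (g : Equiv.Perm (Fin n))⁻¹ * σ := by
      rw [← heq]; group
    have hq : q = Quotient.mk S ((g : Equiv.Perm (Fin n))⁻¹ * σ) := by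
      rw [← hqout, Quotient.out_eq]
    have hq2 : Quotient.mk S ((g : Equiv.Perm (Fin n))⁻¹ * σ) = Quotient.mk S σ := by
      apply Quotient.sound
      apply QuotientGroup.rightRel_apply.mpr
      have : σ * ((g : Equiv.Perm (Fin n))⁻¹ * σ)⁻¹ = (g : Equiv.Perm (Fin n)) := by group
      rw [this]
      exact g.2
    have : q.out = w := by rw [hq, hq2, ← hw]
    apply hg
    apply Subtype.ext
    have : (g : Equiv.Perm (Fin n))⁻¹ * σ = w := by rw [← hqout, this]
    calc (g : Equiv.Perm (Fin n)) = σ * ((g : Equiv.Perm (Fin n))⁻¹ * σ)⁻¹ := by group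
      _ = σ * w⁻¹ := by rw [this]

lemma den_pos (G : Subgroup (Equiv.Perm (Fin n))) {δ : ℝ} (hδ : 0 < δ) (x : Fin n → ℝ) :
    0 < den G δ x := by
  by_cases hs : Sep δ x
  · obtain ⟨g₀, hpos, _⟩ := gam_structure G hδ hs
    have h1 : gam G δ (permAct (g₀ : Equiv.Perm (Fin n)) x) ≤
        ∑ g : G, gam G δ (permAct (g : Equiv.Perm (Fin n)) x) :=
      Finset.single_le_sum (f := fun g : G => gam G δ (permAct (g : Equiv.Perm (Fin n)) x))
        (fun g _ => gam_nonneg G δ _) (Finset.mem_univ g₀)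
    have := muw_nonneg δ x
    unfold den
    linarith
  · have h1 : muw δ x ≠ 0 := fun hc => hs ((muw_eq_zero_iff δ x).mp hc)
    have h2 : 0 < muw δ x := lt_of_le_of_ne (muw_nonneg δ x) (Ne.symm h1)
    have h3 : 0 ≤ ∑ g : G, gam G δ (permAct (g : Equiv.Perm (Fin n)) x) :=
      Finset.sum_nonneg fun g _ => gam_nonneg G δ _
    unfold den
    linarith

lemma phi_eval (G : Subgroup (Equiv.Perm (Fin n))) {δ : ℝ} (θ : ℝ) (N : ℕ) (d : ℕ → ℝ)
    (y : ℕ → Fin n → ℝ) (F : (Fin n → ℝ) → ℝ) {x : Fin n → ℝ}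
    (hδ : 0 < δ) (hx : Sep δ x) :
    ∃ h ∈ G, phiC G δ θ N d y F x = permAct h (curveC θ N d y (F x)) := by
  obtain ⟨g₀, hpos, hvan⟩ := gam_structure G hδ hx
  refine ⟨(g₀ : Equiv.Perm (Fin n))⁻¹, inv_mem g₀.2, ?_⟩
  have hsum : ∑ g : G, gam G δ (permAct (g : Equiv.Perm (Fin n)) x) •
      permAct ((g : Equiv.Perm (Fin n))⁻¹) (curveC θ N d y (F x))
      = gam G δ (permAct (g₀ : Equiv.Perm (Fin n)) x) •
        permAct ((g₀ : Equiv.Perm (Fin n))⁻¹) (curveC θ N d y (F x)) := by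
    apply Fintype.sum_eq_single
    intro b hb
    rw [hvan b hb, zero_smul]
  have hden : den G δ x = gam G δ (permAct (g₀ : Equiv.Perm (Fin n)) x) := by
    unfold den
    rw [(muw_eq_zero_iff δ x).mpr hx, add_zero]
    apply Fintype.sum_eq_single
    intro b hb
    exact hvan b hb
  unfold phiC
  rw [hsum, hden, smul_smul, inv_mul_cancel₀ (ne_of_gt hpos), one_smul]

end Bump

section Equiv

variable {n : ℕ}

lemma muw_permAct (δ : ℝ) (g : Equiv.Perm (Fin n)) (x : Fin n → ℝ) :
    muw δ (permAct g x) = muw δ x := by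
  unfold muw
  apply Finset.sum_equiv (Equiv.prodCongr g g)
  · intro p
    simp only [Finset.mem_offDiag, Finset.mem_univ, true_and, Equiv.prodCongr_apply, Prod.map]
    exact ⟨fun h => fun hc => h (g.injective hc), fun h => fun hc => h (congrArg g hc)⟩
  · intro p _
    simp [permAct, Equiv.prodCongr]

lemma sum_gam_perm (G : Subgroup (Equiv.Perm (Fin n))) (δ : ℝ) {g : Equiv.Perm (Fin n)}
    (hg : g ∈ G) (x : Fin n → ℝ) :
    ∑ u : G, gam G δ (permAct (u : Equiv.Perm (Fin n)) (permAct g x)) =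
      ∑ u : G, gam G δ (permAct (u : Equiv.Perm (Fin n)) x) := by
  rw [← Equiv.sum_comp (Equiv.mulLeft (⟨g, hg⟩ : G))
    (fun u : G => gam G δ (permAct (u : Equiv.Perm (Fin n)) x))]
  apply Finset.sum_congr rfl
  intro u _
  rw [permAct_permAct]
  rfl

lemma sum_num_perm (G : Subgroup (Equiv.Perm (Fin n))) (δ : ℝ) {g : Equiv.Perm (Fin n)}
    (hg : g ∈ G) (x : Fin n → ℝ) (v : Fin n → ℝ) :
    ∑ u : G, gam G δ (permAct (u : Equiv.Perm (Fin n)) (permAct g x)) •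
        permAct ((u : Equiv.Perm (Fin n))⁻¹) v =
      permAct g (∑ u : G, gam G δ (permAct (u : Equiv.Perm (Fin n)) x) •
        permAct ((u : Equiv.Perm (Fin n))⁻¹) v) := by
  rw [permAct_sum]
  have hrhs : ∀ u : G, permAct g (gam G δ (permAct (u : Equiv.Perm (Fin n)) x) •
      permAct ((u : Equiv.Perm (Fin n))⁻¹) v)
      = gam G δ (permAct (u : Equiv.Perm (Fin n)) x) •
        permAct ((u : Equiv.Perm (Fin n))⁻¹ * g) v := by
    intro u
    rw [permAct_smul, permAct_permAct]
  rw [Finset.sum_congr rfl (fun u _ => hrhs u)]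
  rw [← Equiv.sum_comp (Equiv.mulLeft (⟨g, hg⟩ : G))
    (fun u : G => gam G δ (permAct (u : Equiv.Perm (Fin n)) x) •
      permAct ((u : Equiv.Perm (Fin n))⁻¹ * g) v)]
  apply Finset.sum_congr rfl
  intro u _
  have hcoe : ((Equiv.mulLeft (⟨g, hg⟩ : G) u : G) : Equiv.Perm (Fin n)) =
      g * (u : Equiv.Perm (Fin n)) := rfl
  rw [hcoe, permAct_permAct]
  congr 1
  group

lemma phi_equivariant (G : Subgroup (Equiv.Perm (Fin n))) (δ θ : ℝ) (N : ℕ) (d : ℕ → ℝ)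
    (y : ℕ → Fin n → ℝ) {F : (Fin n → ℝ) → ℝ} (hF : IsInvariant G F) :
    IsEquivariant G (phiC G δ θ N d y F) := by
  intro g hg x
  unfold phiC
  rw [hF g hg x]
  have hden : den G δ (permAct g x) = den G δ x := by
    unfold den
    rw [sum_gam_perm G δ hg x, muw_permAct δ g x]
  rw [hden, sum_num_perm G δ hg x (curveC θ N d y (F x)), permAct_smul]

end Equiv

section Cont

variable {n : ℕ}

lemma gam_continuous (G : Subgroup (Equiv.Perm (Fin n))) (δ : ℝ) :
    Continuous (gam (n := n) G δ) := by
  apply continuous_finset_sum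
  intro q _
  apply continuous_finset_prod
  intro p _
  exact continuous_const.max (continuous_const.min
    ((continuous_apply _).sub (continuous_apply _)))

lemma muw_continuous (δ : ℝ) : Continuous (muw (n := n) δ) := by
  apply continuous_finset_sum
  intro p _
  exact continuous_const.max (continuous_const.sub
    (((continuous_apply p.1).sub (continuous_apply p.2)).abs))

lemma curveC_continuous (θ : ℝ) (N : ℕ) (d : ℕ → ℝ) (y : ℕ → Fin n → ℝ) :
    Continuous (curveC (n := n) θ N d y) := by
  apply Continuous.add continuous_const
  apply continuous_finset_sum
  intro k _
  exact (continuous_const.max (continuous_const.min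
    ((continuous_id.sub continuous_const).div_const _))).smul continuous_const

lemma den_continuous (G : Subgroup (Equiv.Perm (Fin n))) (δ : ℝ) :
    Continuous (den (n := n) G δ) := by
  apply Continuous.add
  · apply continuous_finset_sum
    intro u _
    exact (gam_continuous G δ).comp (continuous_permAct _)
  · exact muw_continuous δ

lemma phiC_continuous (G : Subgroup (Equiv.Perm (Fin n))) {δ : ℝ} (hδ : 0 < δ) (θ : ℝ)
    (N : ℕ) (d : ℕ → ℝ) (y : ℕ → Fin n → ℝ) {F : (Fin n → ℝ) → ℝ} (hF : Continuous F) :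
    Continuous (phiC G δ θ N d y F) := by
  apply Continuous.fun_smul
  · exact ((den_continuous G δ).inv₀ (fun x => (den_pos G hδ x).ne'))
  · apply continuous_finset_sum
    intro u _
    exact ((gam_continuous G δ).comp (continuous_permAct _)).smul
      ((continuous_permAct _).comp ((curveC_continuous θ N d y).comp hF))

end Cont

section Norms

variable {n : ℕ}

lemma norm_curveC_le (θ : ℝ) (N : ℕ) (d : ℕ → ℝ) (y : ℕ → Fin n → ℝ) (t : ℝ) :
    ‖curveC θ N d y t‖ ≤ ‖y 0‖ + ∑ k ∈ Finset.Ico 1 N, ‖y k - y (k-1)‖ := by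
  refine (norm_add_le _ _).trans (add_le_add_right ?_ _)
  refine (norm_sum_le _ _).trans (Finset.sum_le_sum fun k _ => ?_)
  rw [norm_smul, Real.norm_eq_abs, abs_of_nonneg (le_max_left _ _)]
  have h1 : max 0 (min 1 ((t - (d k - θ)) / (2*θ))) ≤ 1 :=
    max_le zero_le_one (min_le_left _ _)
  calc max 0 (min 1 ((t - (d k - θ)) / (2*θ))) * ‖y k - y (k-1)‖
      ≤ 1 * ‖y k - y (k-1)‖ := mul_le_mul_of_nonneg_right h1 (norm_nonneg _)
    _ = ‖y k - y (k-1)‖ := one_mul _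

lemma norm_phiC_le (G : Subgroup (Equiv.Perm (Fin n))) {δ : ℝ} (hδ : 0 < δ) (θ : ℝ)
    (N : ℕ) (d : ℕ → ℝ) (y : ℕ → Fin n → ℝ) (F : (Fin n → ℝ) → ℝ) (x : Fin n → ℝ) :
    ‖phiC G δ θ N d y F x‖ ≤ ‖y 0‖ + ∑ k ∈ Finset.Ico 1 N, ‖y k - y (k-1)‖ := by
  set CC := ‖y 0‖ + ∑ k ∈ Finset.Ico 1 N, ‖y k - y (k-1)‖ with hCC
  have hCC0 : 0 ≤ CC := by
    rw [hCC]
    positivity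
  have hd := den_pos G hδ x
  unfold phiC
  rw [norm_smul, Real.norm_eq_abs, abs_of_nonneg (inv_nonneg.mpr hd.le)]
  have hnum : ‖∑ g : G, gam G δ (permAct (g : Equiv.Perm (Fin n)) x) •
      permAct ((g : Equiv.Perm (Fin n))⁻¹) (curveC θ N d y (F x))‖ ≤
      (∑ g : G, gam G δ (permAct (g : Equiv.Perm (Fin n)) x)) * CC := by
    refine (norm_sum_le _ _).trans ?_
    rw [Finset.sum_mul]
    refine Finset.sum_le_sum fun u _ => ?_
    rw [norm_smul, Real.norm_eq_abs, abs_of_nonneg (gam_nonneg G δ _), norm_permAct]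
    exact mul_le_mul_of_nonneg_left (norm_curveC_le θ N d y (F x)) (gam_nonneg G δ _)
  have hsle : (∑ g : G, gam G δ (permAct (g : Equiv.Perm (Fin n)) x)) ≤ den G δ x :=
    le_add_of_nonneg_right (muw_nonneg δ x)
  calc (den G δ x)⁻¹ * ‖∑ g : G, gam G δ (permAct (g : Equiv.Perm (Fin n)) x) •
        permAct ((g : Equiv.Perm (Fin n))⁻¹) (curveC θ N d y (F x))‖
      ≤ (den G δ x)⁻¹ * ((∑ g : G, gam G δ (permAct (g : Equiv.Perm (Fin n)) x)) * CC) :=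
        mul_le_mul_of_nonneg_left hnum (inv_nonneg.mpr hd.le)
    _ ≤ (den G δ x)⁻¹ * (den G δ x * CC) :=
        mul_le_mul_of_nonneg_left (mul_le_mul_of_nonneg_right hsle hCC0) (inv_nonneg.mpr hd.le)
    _ = CC := by
        rw [← mul_assoc, inv_mul_cancel₀ hd.ne', one_mul]

end Norms

section CurveEval

variable {n : ℕ}

lemma curveC_eval {θ : ℝ} (hθ : 0 < θ) {N : ℕ} {d : ℕ → ℝ} (hd : StrictMono d)
    (y : ℕ → Fin n → ℝ) {t : ℝ} {k : ℕ} (hk : k < N) (h1 : d k < t) (h2 : t < d (k+1))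
    (hsep : ∀ j ∈ Finset.Ico 1 N, θ < |t - d j|) :
    curveC θ N d y t = y k := by
  unfold curveC
  have hsplit : Finset.Ico 1 N = Finset.Ico 1 (k+1) ∪ Finset.Ico (k+1) N :=
    (Finset.Ico_union_Ico_eq_Ico (by omega) (by omega)).symm
  rw [hsplit, Finset.sum_union (Finset.Ico_disjoint_Ico_consecutive 1 (k+1) N)]
  have hA : ∑ j ∈ Finset.Ico 1 (k+1),
      (max 0 (min 1 ((t - (d j - θ)) / (2*θ)))) • (y j - y (j-1)) = y k - y 0 := by
    have hone : ∀ j ∈ Finset.Ico 1 (k+1),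
        (max 0 (min 1 ((t - (d j - θ)) / (2*θ)))) • (y j - y (j-1)) = y j - y (j-1) := by
      intro j hj
      obtain ⟨hj1, hj2⟩ := Finset.mem_Ico.mp hj
      have hdj : d j ≤ d k := hd.monotone (by omega)
      have habs : θ < |t - d j| := hsep j (Finset.mem_Ico.mpr ⟨hj1, Nat.lt_of_lt_of_le hj2 hk⟩)
      have hpos : 0 < t - d j := by linarith
      have ht : θ < t - d j := by
        rwa [abs_of_pos hpos] at habs
      have hr : (1:ℝ) ≤ (t - (d j - θ)) / (2*θ) := by
        rw [le_div_iff₀ (by positivity)]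
        linarith
      rw [min_eq_left hr, max_eq_right zero_le_one, one_smul]
    rw [Finset.sum_congr rfl hone, Finset.sum_Ico_eq_sum_range]
    have htel := Finset.sum_range_sub (fun i => y i) k
    simp only [Nat.add_sub_cancel] at htel ⊢
    calc ∑ i ∈ Finset.range k, (y (1 + i) - y (1 + i - 1))
        = ∑ i ∈ Finset.range k, (y (i + 1) - y i) := by
          apply Finset.sum_congr rfl
          intro i _
          have h1i : 1 + i = i + 1 := Nat.add_comm 1 i
          rw [h1i, Nat.add_sub_cancel]
      _ = y k - y 0 := htel
  have hB : ∑ j ∈ Finset.Ico (k+1) N,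
      (max 0 (min 1 ((t - (d j - θ)) / (2*θ)))) • (y j - y (j-1)) = 0 := by
    apply Finset.sum_eq_zero
    intro j hj
    obtain ⟨hj1, hj2⟩ := Finset.mem_Ico.mp hj
    have hdj : d (k+1) ≤ d j := hd.monotone (by omega)
    have habs : θ < |t - d j| :=
      hsep j (Finset.mem_Ico.mpr ⟨Nat.le_trans (Nat.succ_le_succ (Nat.zero_le k)) hj1, hj2⟩)
    have hneg : t - d j < 0 := by linarith
    have ht : θ < d j - t := by
      rw [abs_of_neg hneg] at habs
      linarith
    have hr : (t - (d j - θ)) / (2*θ) < 0 := by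
      apply div_neg_of_neg_of_pos _ (by positivity)
      linarith
    have hmin : min 1 ((t - (d j - θ)) / (2*θ)) ≤ 0 := (min_le_right _ _).trans hr.le
    rw [max_eq_left hmin, zero_smul]
  rw [hA, hB]
  abel

lemma find_cell {N : ℕ} {d : ℕ → ℝ} (hd : StrictMono d) {t : ℝ}
    (h0 : d 0 < t) (hN : t < d N) (havoid : ∀ j ∈ Finset.Ico 1 N, d j ≠ t) :
    ∃ k, k < N ∧ d k < t ∧ t < d (k+1) := by
  have hNpos : 0 < N := by
    rcases Nat.eq_zero_or_pos N with h | h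
    · subst h; linarith
    · exact h
  classical
  set S := (Finset.range N).filter (fun j => d j < t) with hS
  have h0S : (0:ℕ) ∈ S := Finset.mem_filter.mpr ⟨Finset.mem_range.mpr hNpos, h0⟩
  have hSne : S.Nonempty := ⟨0, h0S⟩
  set k := S.max' hSne with hk
  have hkS : k ∈ S := Finset.max'_mem _ _
  have hkN : k < N := Finset.mem_range.mp (Finset.mem_filter.mp hkS).1
  have hdk : d k < t := (Finset.mem_filter.mp hkS).2
  refine ⟨k, hkN, hdk, ?_⟩
  rcases eq_or_lt_of_le (Nat.succ_le_of_lt hkN) with he | hlt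
  · have hkn : k + 1 = N := he
    rw [hkn]; exact hN
  · have hnot : k + 1 ∉ S := by
      intro hmem
      have := Finset.le_max' S _ hmem
      omega
    have hge : ¬ d (k+1) < t := fun hc =>
      hnot (Finset.mem_filter.mpr ⟨Finset.mem_range.mpr hlt, hc⟩)
    push_neg at hge
    have hne : d (k+1) ≠ t := havoid _ (Finset.mem_Ico.mpr ⟨by omega, hlt⟩)
    exact lt_of_le_of_ne hge (Ne.symm hne)

lemma hyperplane_null {i j : Fin n} (hij : i ≠ j) :
    volume {x : Fin n → ℝ | x i = x j} = 0 := by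
  have heq : {x : Fin n → ℝ | x i = x j} =
      (LinearMap.ker ((LinearMap.proj i : (Fin n → ℝ) →ₗ[ℝ] ℝ) - LinearMap.proj j) :
        Set (Fin n → ℝ)) := by
    ext x
    simp [LinearMap.mem_ker, sub_eq_zero]
  rw [heq]
  apply MeasureTheory.Measure.addHaar_submodule
  intro htop
  have hmem : Pi.single j 1 ∈
      LinearMap.ker ((LinearMap.proj i : (Fin n → ℝ) →ₗ[ℝ] ℝ) - LinearMap.proj j) := by
    rw [htop]; exact Submodule.mem_top
  rw [LinearMap.mem_ker, LinearMap.sub_apply, LinearMap.proj_apply, LinearMap.proj_apply] at hmem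
  rw [Pi.single_eq_of_ne hij, Pi.single_eq_same] at hmem
  norm_num at hmem

end CurveEval

set_option maxHeartbeats 2000000

/-- an invariant continuous `F` whose range is covered by the range of a
Lipschitz invariant `g` can be written, up to `ε` in `L^p(K)`, as `g ∘ φ` with `φ`
a continuous equivariant mapping. -/
theorem approximating_equivariant_mapping_is_sufficient
    (n : ℕ) (G : Subgroup (Equiv.Perm (Fin n))) (hG : IsTransitive G)
    (p : ℝ) (hp : 1 ≤ p)
    (F : (Fin n → ℝ) → ℝ) (hFc : Continuous F) (hFinv : IsInvariant G F)
    (g : (Fin n → ℝ) → ℝ) (hgLip : IsLip g) (hginv : IsInvariant G g)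
    (hrange : Set.range F ⊆ Set.range g) :
    ∀ K : Set (Fin n → ℝ), IsCompact K → ∀ ε : ℝ, 0 < ε →
      ∃ φ : (Fin n → ℝ) → (Fin n → ℝ), Continuous φ ∧ IsEquivariant G φ ∧
        lpErr p K (fun x => F x - g (φ x)) ≤ ENNReal.ofReal ε := by
  classical
  intro K hK ε hε
  rcases K.eq_empty_or_nonempty with rfl | hne
  · refine ⟨id, continuous_id, fun a ha x => rfl, ?_⟩
    simp [lpErr]
  obtain ⟨L, hL⟩ := hgLip
  have hgc : Continuous g := hL.continuous
  have hKm : MeasurableSet K := hK.isClosed.measurableSet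
  have hKvol : volume K ≠ ⊤ := hK.measure_lt_top.ne
  obtain ⟨xm, hxmK, hxm⟩ := hK.exists_isMinOn hne hFc.continuousOn
  obtain ⟨xM, hxMK, hxM⟩ := hK.exists_isMaxOn hne hFc.continuousOn
  set m := F xm with hm
  set M := F xM with hM
  have hmM : m ≤ M := hxm hxMK
  have hFlo : ∀ x ∈ K, m ≤ F x := fun x hx => hxm hx
  have hFhi : ∀ x ∈ K, F x ≤ M := fun x hx => hxM hx
  obtain ⟨ym, hym⟩ := hrange (Set.mem_range_self xm)
  obtain ⟨yM, hyM⟩ := hrange (Set.mem_range_self xM)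
  have hIcc : Set.Icc m M ⊆ Set.range g := by
    have h1 := intermediate_value_univ ym yM hgc
    rw [hym, hyM] at h1
    exact h1
  set p' := ENNReal.ofReal p with hp'
  have hp0 : (0:ℝ) < p := lt_of_lt_of_le one_pos hp
  have hp'1 : 1 ≤ p' := by
    rw [hp']
    exact ENNReal.one_le_ofReal.mpr hp
  have hpt : p'.toReal = p := ENNReal.toReal_ofReal hp0.le
  set R := ((volume K) ^ p⁻¹).toReal with hR
  have hRtop : (volume K) ^ p⁻¹ ≠ ⊤ :=
    ENNReal.rpow_ne_top_of_nonneg (by positivity) hKvol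
  have hR0 : 0 ≤ R := ENNReal.toReal_nonneg
  set ε₁ := (ε/2) / (R + 1) with hε₁def
  have hε₁ : 0 < ε₁ := by positivity
  set hstep := ε₁ / 2 with hstepdef
  have hh : 0 < hstep := by positivity
  have hatoms : Set.Countable {c : ℝ | 0 < (volume.restrict K) {x | F x = c}} :=
    Measure.countable_meas_level_set_pos hFc.measurable
  have hchoose : ∀ k : ℕ, ∃ c : ℝ,
      c ∈ Set.Ioo (m + k*hstep - hstep) (m + k*hstep) ∧
      (volume.restrict K) {x | F x = c} = 0 := by
    intro k
    by_contra hcon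
    push_neg at hcon
    have hsub : Set.Ioo (m + k*hstep - hstep) (m + k*hstep) ⊆
        {c : ℝ | 0 < (volume.restrict K) {x | F x = c}} := fun c hc =>
      lt_of_le_of_ne (zero_le) (Ne.symm (hcon c hc))
    have h0 : volume (Set.Ioo (m + k*hstep - hstep) (m + k*hstep)) = 0 :=
      measure_mono_null hsub (Set.Countable.measure_zero hatoms _)
    rw [Real.volume_Ioo] at h0
    have heq : m + k*hstep - (m + k*hstep - hstep) = hstep := by ring
    rw [heq, ENNReal.ofReal_eq_zero] at h0
    linarith
  choose d hd1 hd2 using hchoose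
  have hdmono : StrictMono d := by
    apply strictMono_nat_of_lt_succ
    intro k
    have h1 := (hd1 k).2
    have h2 := (hd1 (k+1)).1
    push_cast at h1 h2
    linarith
  have hd0m : d 0 < m := by
    have := (hd1 0).2
    simpa using this
  set N := ⌈(M - m)/hstep⌉₊ + 1 with hNdef
  have hdN : M < d N := by
    have h2 := (hd1 N).1
    have h3 : (M - m)/hstep ≤ (⌈(M - m)/hstep⌉₊ : ℝ) := Nat.le_ceil _
    have h4 : M - m ≤ (⌈(M - m)/hstep⌉₊ : ℝ) * hstep := (div_le_iff₀ hh).mp h3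
    rw [hNdef] at h2
    push_cast at h2
    linarith
  have hspace : ∀ k, d (k+1) - d k ≤ ε₁ := by
    intro k
    have h1 := (hd1 k).1
    have h2 := (hd1 (k+1)).2
    push_cast at h1 h2
    rw [hstepdef] at h1 h2
    linarith
  set v : ℕ → ℝ := fun k => min M (max m ((d k + d (k+1))/2)) with hvdef
  have hvm : ∀ k, v k ∈ Set.Icc m M := fun k =>
    ⟨le_min hmM (le_max_left _ _), min_le_left _ _⟩
  choose y hyv using fun k => hIcc (hvm k)
  set CG := ‖y 0‖ + ∑ k ∈ Finset.Ico 1 N, ‖y k - y (k-1)‖ with hCG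
  have hCG0 : 0 ≤ CG := by
    rw [hCG]
    positivity
  set C := max |m| |M| + (|g 0| + (L:ℝ) * CG) with hCdef
  have hC0 : 0 ≤ C := by
    rw [hCdef]
    positivity
  set bad : ℕ → Set (Fin n → ℝ) := fun j =>
    K ∩ ((⋃ pq ∈ (Finset.univ : Finset (Fin n)).offDiag,
          {x : Fin n → ℝ | |x pq.1 - x pq.2| < 1/((j:ℝ)+1)}) ∪
         (⋃ i ∈ Finset.Ico 1 N, F ⁻¹' Metric.closedBall (d i) (1/((j:ℝ)+1)))) with hbaddef
  have hbadm : ∀ j, MeasurableSet (bad j) := by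
    intro j
    apply hKm.inter
    apply MeasurableSet.union
    · apply Set.Finite.measurableSet_biUnion (Finset.finite_toSet _)
      intro pq _
      exact (isOpen_lt (((continuous_apply pq.1).sub (continuous_apply pq.2)).abs)
        continuous_const).measurableSet
    · apply Set.Finite.measurableSet_biUnion (Finset.finite_toSet _)
      intro i _
      exact hFc.measurable measurableSet_closedBall
  have hbadanti : Antitone bad := by
    intro j1 j2 hj
    have hle : 1/((j2:ℝ)+1) ≤ 1/((j1:ℝ)+1) := by
      apply one_div_le_one_div_of_le (by positivity)
      have := (Nat.cast_le (α := ℝ)).mpr hj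
      linarith
    rintro x ⟨hxK, hx⟩
    refine ⟨hxK, ?_⟩
    rcases hx with h | h
    · left
      simp only [Set.mem_iUnion] at h ⊢
      obtain ⟨pq, hpq, hlt⟩ := h
      exact ⟨pq, hpq, lt_of_lt_of_le hlt hle⟩
    · right
      simp only [Set.mem_iUnion] at h ⊢
      obtain ⟨i, hi, hball⟩ := h
      exact ⟨i, hi, Metric.closedBall_subset_closedBall hle hball⟩
  have hbadfin : volume (bad 0) ≠ ⊤ :=
    (lt_of_le_of_lt (measure_mono Set.inter_subset_left) hK.measure_lt_top).ne
  have hinter0 : volume (⋂ j, bad j) = 0 := by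
    have hsub : (⋂ j, bad j) ⊆
        (⋃ pq : Fin n × Fin n, {x : Fin n → ℝ | pq.1 ≠ pq.2 ∧ x pq.1 = x pq.2}) ∪
        (⋃ i : ℕ, (K ∩ F ⁻¹' {d i})) := by
      intro x hx
      have hxK : x ∈ K := (Set.mem_iInter.mp hx 0).1
      by_contra hout
      have hne2 : ∀ pq ∈ (Finset.univ : Finset (Fin n)).offDiag, x pq.1 ≠ x pq.2 := by
        intro pq hpq heq
        apply hout
        left
        simp only [Set.mem_iUnion]
        exact ⟨pq, (Finset.mem_offDiag.mp hpq).2.2, heq⟩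
      have hnd : ∀ i : ℕ, F x ≠ d i := by
        intro i heq
        apply hout
        right
        simp only [Set.mem_iUnion]
        exact ⟨i, hxK, heq⟩
      set S : Finset ℝ := insert 1 (((Finset.univ : Finset (Fin n)).offDiag.image
          (fun pq => |x pq.1 - x pq.2|)) ∪
          ((Finset.Ico 1 N).image (fun i => |F x - d i|))) with hSdef
      have hSne : S.Nonempty := ⟨1, Finset.mem_insert_self _ _⟩
      have hSpos : ∀ c ∈ S, 0 < c := by
        intro c hc
        rcases Finset.mem_insert.mp hc with rfl | hc2
        · norm_num
        rcases Finset.mem_union.mp hc2 with hc3 | hc3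
        · obtain ⟨pq, hpq, rfl⟩ := Finset.mem_image.mp hc3
          exact abs_pos.mpr (sub_ne_zero.mpr (hne2 pq hpq))
        · obtain ⟨i, hi, rfl⟩ := Finset.mem_image.mp hc3
          exact abs_pos.mpr (sub_ne_zero.mpr (hnd i))
      obtain ⟨j, hjlt⟩ := exists_nat_one_div_lt (hSpos _ (S.min'_mem hSne))
      have hxj := Set.mem_iInter.mp hx j
      obtain ⟨_, hU⟩ := hxj
      rcases hU with h | h
      · simp only [Set.mem_iUnion] at h
        obtain ⟨pq, hpq, hlt⟩ := h
        have hmin : S.min' hSne ≤ |x pq.1 - x pq.2| :=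
          Finset.min'_le _ _ (Finset.mem_insert_of_mem (Finset.mem_union_left _
            (Finset.mem_image_of_mem _ hpq)))
        rw [Set.mem_setOf_eq] at hlt
        linarith
      · simp only [Set.mem_iUnion] at h
        obtain ⟨i, hi, hball⟩ := h
        have hmin : S.min' hSne ≤ |F x - d i| :=
          Finset.min'_le _ _ (Finset.mem_insert_of_mem (Finset.mem_union_right _
            (Finset.mem_image_of_mem _ hi)))
        rw [Set.mem_preimage, Metric.mem_closedBall, Real.dist_eq] at hball
        linarith
    refine measure_mono_null hsub (measure_union_null ?_ ?_)
    · apply measure_iUnion_null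
      intro pq
      by_cases hc : pq.1 = pq.2
      · have hempty : {x : Fin n → ℝ | pq.1 ≠ pq.2 ∧ x pq.1 = x pq.2} = ∅ := by
          ext z
          simp [hc]
        rw [hempty]
        exact measure_empty
      · exact measure_mono_null (fun z hz => hz.2) (hyperplane_null hc)
    · apply measure_iUnion_null
      intro i
      have h5 := hd2 i
      have hms : MeasurableSet {x : Fin n → ℝ | F x = d i} :=
        hFc.measurable (measurableSet_singleton _)
      rw [Measure.restrict_apply hms] at h5
      rw [Set.inter_comm]
      exact h5
  have htend := tendsto_measure_iInter_atTop (μ := volume)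
      (fun j => (hbadm j).nullMeasurableSet) hbadanti ⟨0, hbadfin⟩
  rw [hinter0] at htend
  set q : ℝ := (ε/2)/(C+1) with hq
  have hq0 : 0 < q := by positivity
  set w : ℝ := q ^ p with hw
  have hw0 : 0 < w := Real.rpow_pos_of_pos hq0 _
  obtain ⟨j₀, hj₀⟩ := (htend.eventually_lt_const (ENNReal.ofReal_pos.mpr hw0)).exists
  set δ : ℝ := 1/((j₀:ℝ)+1) with hδdef
  have hδ : 0 < δ := by positivity
  have hj₀' : volume (bad j₀) < ENNReal.ofReal w := hj₀
  refine ⟨phiC G δ δ N d y F, phiC_continuous G hδ δ N d y hFc,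
    phi_equivariant G δ δ N d y hFinv, ?_⟩
  have hgood : ∀ x ∈ K, x ∉ bad j₀ → |F x - g (phiC G δ δ N d y F x)| ≤ ε₁ := by
    intro x hxK hxb
    have hsep : Sep δ x := by
      intro i j hij
      by_contra hc
      push_neg at hc
      apply hxb
      refine ⟨hxK, Or.inl ?_⟩
      simp only [Set.mem_iUnion]
      exact ⟨(i,j), Finset.mem_offDiag.mpr ⟨Finset.mem_univ _, Finset.mem_univ _, hij⟩, hc⟩
    have havoid : ∀ i ∈ Finset.Ico 1 N, δ < |F x - d i| := by
      intro i hi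
      by_contra hc
      push_neg at hc
      apply hxb
      refine ⟨hxK, Or.inr ?_⟩
      simp only [Set.mem_iUnion]
      refine ⟨i, hi, ?_⟩
      rw [Set.mem_preimage, Metric.mem_closedBall, Real.dist_eq]
      exact hc
    obtain ⟨hperm, hpG, hpx⟩ := phi_eval G δ N d y F hδ hsep
    have h0 : d 0 < F x := lt_of_lt_of_le hd0m (hFlo x hxK)
    have hNx : F x < d N := lt_of_le_of_lt (hFhi x hxK) hdN
    obtain ⟨k, hkN, hk1, hk2⟩ := find_cell hdmono h0 hNx (fun i hi heq => by
      have h6 := havoid i hi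
      rw [heq] at h6
      simp at h6
      linarith)
    have hcv : curveC δ N d y (F x) = y k :=
      curveC_eval hδ hdmono y hkN hk1 hk2 havoid
    rw [hpx, hcv, hginv _ hpG, hyv k]
    have hdk1 : d k < d (k+1) := hdmono (Nat.lt_succ_self k)
    have hv1 : d k ≤ v k := by
      have hmid1 : d k ≤ (d k + d (k+1))/2 := by linarith
      exact le_min (le_trans hk1.le (hFhi x hxK)) (le_trans hmid1 (le_max_right _ _))
    have hv2 : v k ≤ d (k+1) := by
      have hmid2 : (d k + d (k+1))/2 ≤ d (k+1) := by linarith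
      exact le_trans (min_le_right _ _)
        (max_le (le_trans (hFlo x hxK) hk2.le) hmid2)
    have hsp := hspace k
    rw [abs_le]
    exact ⟨by linarith, by linarith⟩
  have hbound : ∀ x ∈ K, |F x - g (phiC G δ δ N d y F x)| ≤ C := by
    intro x hxK
    have h1 : |F x| ≤ max |m| |M| := by
      rw [abs_le]
      constructor
      · have h2 : |m| ≤ max |m| |M| := le_max_left _ _
        have h3 : -|m| ≤ m := neg_abs_le m
        have h4 := hFlo x hxK
        linarith
      · have h2 : M ≤ |M| := le_abs_self M
        have h3 : |M| ≤ max |m| |M| := le_max_right _ _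
        have h4 := hFhi x hxK
        linarith
    have h2 : |g (phiC G δ δ N d y F x) - g 0| ≤ (L:ℝ) * ‖phiC G δ δ N d y F x‖ := by
      have h5 := hL.dist_le_mul (phiC G δ δ N d y F x) 0
      rwa [Real.dist_eq, dist_zero_right] at h5
    have h3 : ‖phiC G δ δ N d y F x‖ ≤ CG := norm_phiC_le G hδ δ N d y F x
    have h4 : |g (phiC G δ δ N d y F x)| ≤ |g 0| + (L:ℝ) * CG := by
      have h5 : |g (phiC G δ δ N d y F x)| ≤ |g (phiC G δ δ N d y F x) - g 0| + |g 0| := by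
        calc |g (phiC G δ δ N d y F x)| = |(g (phiC G δ δ N d y F x) - g 0) + g 0| := by
              ring_nf
          _ ≤ |g (phiC G δ δ N d y F x) - g 0| + |g 0| := abs_add_le _ _
      have h6 : (L:ℝ) * ‖phiC G δ δ N d y F x‖ ≤ (L:ℝ) * CG :=
        mul_le_mul_of_nonneg_left h3 L.coe_nonneg
      linarith
    have h7 : |F x - g (phiC G δ δ N d y F x)| ≤ |F x| + |g (phiC G δ δ N d y F x)| := by
      calc |F x - g (phiC G δ δ N d y F x)|
          = |F x + -(g (phiC G δ δ N d y F x))| := by rw [sub_eq_add_neg]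
        _ ≤ |F x| + |-(g (phiC G δ δ N d y F x))| := abs_add_le _ _
        _ = |F x| + |g (phiC G δ δ N d y F x)| := by rw [abs_neg]
    rw [hCdef]
    linarith
  have herrc : Continuous (fun x => F x - g (phiC G δ δ N d y F x)) :=
    hFc.sub (hgc.comp (phiC_continuous G hδ δ N d y hFc))
  show eLpNorm (fun x => F x - g (phiC G δ δ N d y F x)) p' (volume.restrict K)
      ≤ ENNReal.ofReal ε
  set err := fun x => F x - g (phiC G δ δ N d y F x) with herrdef
  set bs := bad j₀ with hbs
  have hbsm : MeasurableSet bs := hbadm j₀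
  have hsplit : err = bs.indicator err + bsᶜ.indicator err :=
    (Set.indicator_self_add_compl bs err).symm
  have hmeas1 : AEStronglyMeasurable (bs.indicator err) (volume.restrict K) :=
    (herrc.aestronglyMeasurable).indicator hbsm
  have hmeas2 : AEStronglyMeasurable (bsᶜ.indicator err) (volume.restrict K) :=
    (herrc.aestronglyMeasurable).indicator hbsm.compl
  have hpart1 : eLpNorm (bs.indicator err) p' (volume.restrict K) ≤ ENNReal.ofReal (ε/2) := by
    have hmono : ∀ x, ‖bs.indicator err x‖ ≤ ‖bs.indicator (fun _ => C) x‖ := by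
      intro x
      by_cases hx : x ∈ bs
      · rw [Set.indicator_of_mem hx, Set.indicator_of_mem hx, Real.norm_eq_abs,
          Real.norm_eq_abs, abs_of_nonneg hC0]
        exact hbound x hx.1
      · rw [Set.indicator_of_notMem hx, Set.indicator_of_notMem hx]
    refine le_trans (eLpNorm_mono hmono) ?_
    refine le_trans (eLpNorm_indicator_const_le (μ := volume.restrict K) (s := bs) C p') ?_
    have hmeasbs : (volume.restrict K) bs ≤ volume bs := by
      rw [Measure.restrict_apply hbsm]
      exact measure_mono Set.inter_subset_left
    have hlt : (volume.restrict K) bs ≤ ENNReal.ofReal w :=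
      le_trans hmeasbs hj₀'.le
    have hnn : (‖C‖₊ : ENNReal) = ENNReal.ofReal C := Real.enorm_eq_ofReal hC0
    calc (‖C‖₊ : ENNReal) * (volume.restrict K) bs ^ (1 / p'.toReal)
        ≤ ENNReal.ofReal C * (ENNReal.ofReal w) ^ (1 / p'.toReal) := by
          rw [hnn]
          exact mul_le_mul_right (ENNReal.rpow_le_rpow hlt (by positivity)) _
      _ = ENNReal.ofReal C * ENNReal.ofReal (w ^ (1/p'.toReal)) := by
          rw [ENNReal.ofReal_rpow_of_pos hw0]
      _ = ENNReal.ofReal C * ENNReal.ofReal q := by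
          congr 1
          rw [hpt, hw, ← Real.rpow_mul hq0.le, mul_one_div_cancel (ne_of_gt hp0),
            Real.rpow_one]
      _ ≤ ENNReal.ofReal (ε/2) := by
          rw [← ENNReal.ofReal_mul hC0]
          apply ENNReal.ofReal_le_ofReal
          rw [hq, ← mul_div_assoc]
          rw [div_le_iff₀ (by linarith : (0:ℝ) < C+1)]
          nlinarith [hε.le, hC0]
  have hpart2 : eLpNorm (bsᶜ.indicator err) p' (volume.restrict K) ≤ ENNReal.ofReal (ε/2) := by
    have hae : ∀ᵐ x ∂(volume.restrict K), ‖bsᶜ.indicator err x‖ ≤ ε₁ := by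
      rw [ae_restrict_iff' hKm]
      apply ae_of_all
      intro x hxK
      by_cases hb : x ∈ bs
      · rw [Set.indicator_of_notMem (by simpa using hb)]
        simpa using hε₁.le
      · rw [Set.indicator_of_mem (Set.mem_compl hb), Real.norm_eq_abs]
        exact hgood x hxK hb
    refine le_trans (eLpNorm_le_of_ae_bound hae) ?_
    rw [Measure.restrict_apply_univ, hpt]
    have h1 : (volume K) ^ p⁻¹ = ENNReal.ofReal R := by
      rw [hR, ENNReal.ofReal_toReal hRtop]
    rw [h1, ← ENNReal.ofReal_mul hR0]
    apply ENNReal.ofReal_le_ofReal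
    rw [hε₁def, ← mul_div_assoc]
    rw [div_le_iff₀ (by linarith : (0:ℝ) < R+1)]
    nlinarith [hε.le, hR0]
  calc eLpNorm err p' (volume.restrict K)
      = eLpNorm (bs.indicator err + bsᶜ.indicator err) p' (volume.restrict K) := by
        rw [← hsplit]
    _ ≤ eLpNorm (bs.indicator err) p' (volume.restrict K) +
        eLpNorm (bsᶜ.indicator err) p' (volume.restrict K) :=
        eLpNorm_add_le hmeas1 hmeas2 hp'1
    _ ≤ ENNReal.ofReal (ε/2) + ENNReal.ofReal (ε/2) := add_le_add hpart1 hpart2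
    _ = ENNReal.ofReal ε := by
        rw [← ENNReal.ofReal_add (by linarith) (by linarith)]
        norm_num

end SymDyn
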